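/- For every α ∈ (0, π/2), setting C = e^{iπ·cos α} and D = e^{iπ·sin α}, the 4×4 complex matrix [[1, 1, 1, 1], [C^{-1}, D, C, D^{-1}], [D, C, D^{-1}, C^{-1}], [D·C^{-1}, C·D, C·D^{-1}, C^{-1}·D^{-1}]] is invertible. -/

import Mathlib

open Real

set_option maxHeartbeats 1000000 in
private lemma det4 (a b c d e f g h i j k l m n o p : ℂ) :
    Matrix.det !![a,b,c,d;e,f,g,h;i,j,k,l;m,n,o,p]
    = a*(f*(k*p-l*o) - g*(j*p-l*n) + h*(j*o-k*n))
      - b*(e*(k*p-l*o) - g*(i*p-l*m) + h*(i*o-k*m))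
      + c*(e*(j*p-l*n) - f*(i*p-l*m) + h*(i*n-j*m))
      - d*(e*(j*o-k*n) - f*(i*o-k*m) + g*(i*n-j*m)) := by
  rw [show (!![a,b,c,d;e,f,g,h;i,j,k,l;m,n,o,p] : Matrix (Fin 4) (Fin 4) ℂ).det =
      _ from Matrix.det_succ_row_zero _]
  simp [Fin.sum_univ_succ, Matrix.det_fin_three,
    show ((1:Fin 4).succAbove 2) = 3 from rfl,
    show ((2:Fin 4).succAbove 2) = 3 from rfl,
    show ((3:Fin 4).succAbove 2) = 2 from rfl,
    show (Fin.castSucc (2 : Fin 3) : Fin 4) = 2 from rfl]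
  ring

private lemma sq_exp_ne_one {x : ℝ} (h0 : 0 < x) (h1 : x < π) :
    Complex.exp (Complex.I * (x : ℂ)) ^ 2 ≠ 1 := by
  rw [sq, ← Complex.exp_add]
  intro h
  rw [Complex.exp_eq_one_iff] at h
  obtain ⟨n, hn⟩ := h
  have him := congrArg Complex.im hn
  simp [Complex.add_im, Complex.mul_im] at him
  -- him : x + x = n * (2 * π) (roughly)
  have hπ := Real.pi_pos
  rcases le_or_gt (n : ℝ) 0 with h | h
  · nlinarith
  · have : (1 : ℝ) ≤ (n : ℝ) := by exact_mod_cast (by exact_mod_cast h : (0:ℤ) < n)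
    nlinarith

private lemma factor_eq (x y : ℝ) :
    Complex.exp (Complex.I*(x:ℂ))^2 * Complex.exp (Complex.I*(y:ℂ))^2
      - 4*(Complex.exp (Complex.I*(x:ℂ)) * Complex.exp (Complex.I*(y:ℂ)))
      + Complex.exp (Complex.I*(x:ℂ))^2 + Complex.exp (Complex.I*(y:ℂ))^2 + 1
    = Complex.exp (Complex.I*((x+y:ℝ):ℂ)) *
        (2 * Complex.cos ((x+y:ℝ):ℂ) + 2 * Complex.cos ((x-y:ℝ):ℂ) - 4) := by
  rw [Complex.two_cos, Complex.two_cos]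
  simp only [sq, ← Complex.exp_add]
  push_cast
  ring_nf
  simp only [sq, ← Complex.exp_add]
  ring_nf
  simp [Complex.exp_zero]
  ring_nf

set_option maxHeartbeats 3000000 in
theorem stmt_14 (α : ℝ) (hα : α ∈ Set.Ioo 0 (π / 2))
    (C D : ℂ)
    (hC : C = Complex.exp (Complex.I * ((π * Real.cos α : ℝ) : ℂ)))
    (hD : D = Complex.exp (Complex.I * ((π * Real.sin α : ℝ) : ℂ))) :
    IsUnit (Matrix.det !![(1 : ℂ), 1, 1, 1;
                          C⁻¹, D, C, D⁻¹;
                          D, C, D⁻¹, C⁻¹;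
                          D * C⁻¹, C * D, C * D⁻¹, C⁻¹ * D⁻¹]) := by
  obtain ⟨hα0, hα1⟩ := hα
  have hπ := Real.pi_pos
  set x : ℝ := π * Real.cos α with hx
  set y : ℝ := π * Real.sin α with hy
  have hsinα : 0 < Real.sin α := Real.sin_pos_of_pos_of_lt_pi hα0 (by linarith)
  have hcosα : 0 < Real.cos α := Real.cos_pos_of_mem_Ioo ⟨by linarith, hα1⟩
  have hpyth := Real.sin_sq_add_cos_sq α
  have hsin1 : Real.sin α < 1 := by nlinarith
  have hcos1 : Real.cos α < 1 := by nlinarith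
  have hx0 : 0 < x := by positivity
  have hx1 : x < π := by nlinarith
  have hy0 : 0 < y := by positivity
  have hy1 : y < π := by nlinarith
  have hC0 : C ≠ 0 := by rw [hC]; exact Complex.exp_ne_zero _
  have hD0 : D ≠ 0 := by rw [hD]; exact Complex.exp_ne_zero _
  have hC2 : C ^ 2 ≠ 1 := by rw [hC]; exact sq_exp_ne_one hx0 hx1
  have hD2 : D ^ 2 ≠ 1 := by rw [hD]; exact sq_exp_ne_one hy0 hy1
  -- the third factor
  have hcc : Real.cos x * Real.cos y < 1 := by
    have h1 := Real.sin_pos_of_pos_of_lt_pi hx0 hx1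
    have h2 := Real.sin_pos_of_pos_of_lt_pi hy0 hy1
    have p1 := Real.sin_sq_add_cos_sq x
    have p2 := Real.sin_sq_add_cos_sq y
    nlinarith [sq_nonneg (Real.cos x - Real.cos y), sq_nonneg (Real.cos x + Real.cos y),
      mul_pos h1 h2]
  have hF : C^2 * D^2 - 4*(C*D) + C^2 + D^2 + 1
      = Complex.exp (Complex.I*((x+y:ℝ):ℂ)) *
        (2 * Complex.cos ((x+y:ℝ):ℂ) + 2 * Complex.cos ((x-y:ℝ):ℂ) - 4) := by
    rw [hC, hD]; exact factor_eq x y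
  have hF0 : C^2 * D^2 - 4*(C*D) + C^2 + D^2 + 1 ≠ 0 := by
    rw [hF]
    apply mul_ne_zero (Complex.exp_ne_zero _)
    have : (2 * Complex.cos ((x+y:ℝ):ℂ) + 2 * Complex.cos ((x-y:ℝ):ℂ) - 4)
        = ((2 * Real.cos (x+y) + 2 * Real.cos (x-y) - 4 : ℝ) : ℂ) := by
      push_cast [Complex.ofReal_cos]
      ring
    rw [this]
    rw [Complex.ofReal_ne_zero]
    rw [Real.cos_add, Real.cos_sub]
    intro h
    nlinarith
  -- the determinant identity
  have hkey : C^2 * D^2 * Matrix.det !![(1 : ℂ), 1, 1, 1;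
                          C⁻¹, D, C, D⁻¹;
                          D, C, D⁻¹, C⁻¹;
                          D * C⁻¹, C * D, C * D⁻¹, C⁻¹ * D⁻¹]
      = -((C^2 - 1) * (D^2 - 1) * (C^2 * D^2 - 4*(C*D) + C^2 + D^2 + 1)) := by
    have hc : C * C⁻¹ = 1 := mul_inv_cancel₀ hC0
    have hd : D * D⁻¹ = 1 := mul_inv_cancel₀ hD0
    rw [det4]
    linear_combination ((-1)*D^2*D⁻¹^2 + D^4 + (2)*C*D^2*D⁻¹ + (-1)*C*D^2*C⁻¹*D⁻¹^2 + (-2)*C*D^3 + (2)*C*D^3*D⁻¹^2 + (-2)*C*D^4*D⁻¹ + C*D^4*C⁻¹ + (2)*C^2*D^2*C⁻¹*D⁻¹ + (-2)*C^2*D^3*C⁻¹ + (-2)*C^3*D^2*D⁻¹ + (2)*C^3*D^3) * hc + ((-1) + (-1)*D*D⁻¹ + (4)*C*D + (2)*C*D^2*D⁻¹ + (-2)*C*D^3 + (-4)*C^3*D + (-2)*C^3*D^2*D⁻¹ + (2)*C^3*D^3 + C^4 + C^4*D*D⁻¹) * hd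
  rw [isUnit_iff_ne_zero]
  intro hdet
  rw [hdet, mul_zero] at hkey
  have := hkey.symm
  rw [neg_eq_zero] at this
  rcases mul_eq_zero.mp this with h | h
  · rcases mul_eq_zero.mp h with h' | h'
    · exact hC2 (by linear_combination h')
    · exact hD2 (by linear_combination h')
  · exact hF0 h
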